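/- For every ε > 0 there exists M₀ such that for every integer M ≥ M₀ and every real number D with 1 ≤ D ≤ M², there exist integers M' and k with 2⁻¹⁰·M ≤ M' ≤ M and (2 − ε)·log₂ M ≤ k ≤ (2 + ε)·log₂ M such that D ≤ C(M', k)·2^(−C(k,2)) ≤ 2D. -/

import Mathlib

lemma btl_fact_lb : ∀ k : ℕ, ((k : ℝ) / 4) ^ k ≤ k.factorial := by
  intro k
  induction k with
  | zero => norm_num
  | succ n ih =>
    rcases Nat.eq_zero_or_pos n with h | h
    · subst h; norm_num
    · have hnp : (0:ℝ) < n := by exact_mod_cast h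
      have h1 : (1 + 1/(n:ℝ)) ^ n ≤ 3 := by
        have h2 : (1:ℝ) + 1/n ≤ Real.exp (1/n) := by
          have := Real.add_one_le_exp (1/(n:ℝ)); linarith
        calc (1 + 1/(n:ℝ)) ^ n ≤ (Real.exp (1/n)) ^ n :=
              pow_le_pow_left₀ (by positivity) h2 n
        _ = Real.exp 1 := by
              rw [← Real.exp_nat_mul]; congr 1; field_simp
        _ ≤ 3 := by linarith [Real.exp_one_lt_d9]
      have e : ((n:ℝ)+1)/4 = ((n:ℝ)/4) * (1 + 1/n) := by field_simp
      have hP : (0:ℝ) ≤ ((n:ℝ)/4) ^ n := by positivity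
      have key : (((n:ℝ)+1)/4) ^ (n+1) ≤ ((n:ℝ)+1) * ((n:ℝ)/4) ^ n := by
        have hQ : (0:ℝ) ≤ (1 + 1/(n:ℝ)) ^ n := by positivity
        calc (((n:ℝ)+1)/4) ^ (n+1) = (((n:ℝ)+1)/4) * ((((n:ℝ)/4) * (1 + 1/n)) ^ n) := by
              rw [pow_succ, e]; ring
        _ = (((n:ℝ)+1)/4) * (((n:ℝ)/4) ^ n * (1 + 1/n) ^ n) := by rw [mul_pow]
        _ ≤ (((n:ℝ)+1)/4) * (((n:ℝ)/4) ^ n * 3) := by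
              have := mul_le_mul_of_nonneg_left h1 hP
              nlinarith
        _ ≤ ((n:ℝ)+1) * ((n:ℝ)/4) ^ n := by nlinarith
      have : ((n:ℝ)+1) * ((n:ℝ)/4) ^ n ≤ ((n+1).factorial : ℝ) := by
        rw [Nat.factorial_succ]
        push_cast
        have := mul_le_mul_of_nonneg_left ih (by positivity : (0:ℝ) ≤ (n:ℝ)+1)
        linarith
      push_cast
      linarith

lemma btl_pow_lb (t : ℕ) (h : 6 ≤ t) : 3 * t + 15 ≤ 2 ^ t := by
  induction t, h using Nat.le_induction with
  | base => norm_num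
  | succ n hn ih => have : 2 ^ (n+1) = 2 * 2 ^ n := by ring
                    omega

lemma btl_choose_step {m k : ℕ} (hk : k ≠ 0) (h : 2 * k ≤ m) :
    (m + 1).choose k ≤ 2 * m.choose k := by
  obtain ⟨j, rfl⟩ := Nat.exists_eq_succ_of_ne_zero hk
  rw [Nat.choose_succ_succ]
  have hj : j < m / 2 := by
    have : j + 1 ≤ m / 2 := (Nat.le_div_iff_mul_le (by norm_num)).2 (by omega)
    omega
  have := Nat.choose_le_succ_of_lt_half_left hj
  simp only [Nat.succ_eq_add_one] at *
  omega

lemma btl_ivt (g : ℕ → ℝ) (D : ℝ) (hD : 0 < D) :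
    ∀ b a : ℕ, a ≤ b → g a ≤ D → D ≤ g b →
    (∀ m, a ≤ m → m < b → g (m+1) ≤ 2 * g m) →
    ∃ m, a ≤ m ∧ m ≤ b ∧ D ≤ g m ∧ g m ≤ 2 * D := by
  intro b
  induction b with
  | zero =>
    intro a ha hga hgb _
    have ha0 : a = 0 := by omega
    subst ha0
    exact ⟨0, le_rfl, le_rfl, hgb, by linarith⟩
  | succ b ih =>
    intro a ha hga hgb hstep
    by_cases hcase : g (b+1) ≤ 2 * D
    · exact ⟨b+1, ha, le_rfl, hgb, hcase⟩
    · push_neg at hcase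
      have han : a ≤ b := by
        rcases Nat.lt_or_ge a (b+1) with h | h
        · omega
        · exfalso
          have : a = b + 1 := by omega
          subst this; linarith
      have hgn : D ≤ g b := by
        have := hstep b han (by omega)
        linarith
      obtain ⟨m, h1, h2, h3, h4⟩ := ih a han hga hgn (fun m hm hm2 => hstep m hm (by omega))
      exact ⟨m, h1, by omega, h3, h4⟩

set_option maxHeartbeats 1600000 in
theorem binomial_technical_lemma :
    ∀ ε > (0 : ℝ), ∃ M₀ : ℕ, ∀ M : ℕ, M₀ ≤ M → ∀ D : ℝ, 1 ≤ D → D ≤ (M : ℝ) ^ 2 →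
      ∃ M' k : ℕ, (M : ℝ) / 2 ^ 10 ≤ (M' : ℝ) ∧ M' ≤ M ∧
        (2 - ε) * Real.logb 2 M ≤ (k : ℝ) ∧ (k : ℝ) ≤ (2 + ε) * Real.logb 2 M ∧
        D ≤ (M'.choose k : ℝ) * 2 ^ (-(k.choose 2 : ℤ)) ∧
        (M'.choose k : ℝ) * 2 ^ (-(k.choose 2 : ℤ)) ≤ 2 * D := by
  intro ε hε
  obtain ⟨n, hn⟩ : ∃ n, n = max 64 (⌈(18/ε)^2⌉₊ + 1) := ⟨_, rfl⟩
  refine ⟨2 ^ n, ?_⟩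
  intro M hM D hD1 hD2
  have hD0 : (0:ℝ) < D := by linarith
  have hM0 : M ≠ 0 := by
    have : 1 ≤ 2 ^ n := Nat.one_le_two_pow
    omega
  obtain ⟨L, hL⟩ : ∃ L, L = Nat.log 2 M := ⟨_, rfl⟩
  have hnL : n ≤ L := by
    rw [hL]; exact (Nat.le_log_iff_pow_le one_lt_two hM0).2 hM
  have hL64 : 64 ≤ L := le_trans (by rw [hn]; exact le_max_left _ _) hnL
  have hL0 : L ≠ 0 := by omega
  have h2L : 2 ^ L ≤ M := by rw [hL]; exact Nat.pow_log_le_self 2 hM0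
  have hM2L : M < 2 ^ (L + 1) := by rw [hL]; exact Nat.lt_pow_succ_log_self one_lt_two M
  obtain ⟨t, ht⟩ : ∃ t, t = Nat.log 2 L := ⟨_, rfl⟩
  have h2tL : 2 ^ t ≤ L := by rw [ht]; exact Nat.pow_log_le_self 2 hL0
  have hLt : L < 2 ^ (t + 1) := by rw [ht]; exact Nat.lt_pow_succ_log_self one_lt_two L
  have ht6 : 6 ≤ t := by
    rw [ht]
    exact (Nat.le_log_iff_pow_le one_lt_two hL0).2 (by norm_num; omega)
  have haux : 3 * t + 15 ≤ 2 ^ t := btl_pow_lb t ht6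
  have hLbig : 3 * t + 15 ≤ L := le_trans haux h2tL
  have hpt : 2 ^ t = 2 * 2 ^ (t - 1) := by
    rw [← pow_succ']; congr 1; omega
  obtain ⟨u, hu⟩ : ∃ u, u = L - (t + 4) := ⟨_, rfl⟩
  obtain ⟨k, hk⟩ : ∃ k, k = 2 * u := ⟨_, rfl⟩
  have hu1 : 2 ^ (t - 1) ≤ u := by omega
  have hk2t : 2 ^ t ≤ k := by omega
  have hkL : k ≤ 2 * L := by omega
  have hpt2 : 2 ^ (t + 2) = 2 * 2 ^ (t + 1) := by ring
  have hkub : k < 2 ^ (t + 2) := by omega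
  have hk0 : k ≠ 0 := by
    have : (1:ℕ) ≤ 2 ^ (t-1) := Nat.one_le_two_pow
    omega
  obtain ⟨c, hc⟩ : ∃ c, c = k.choose 2 := ⟨_, rfl⟩
  have hc2 : c = u * (2 * u - 1) := by
    obtain ⟨v, hv⟩ : ∃ v, v = 2 * u - 1 := ⟨_, rfl⟩
    rw [hc, hk, Nat.choose_two_right, ← hv,
      show 2 * u * v = 2 * (u * v) by ring]
    exact Nat.mul_div_cancel_left _ (by norm_num)
  obtain ⟨a, ha⟩ : ∃ a, a = M / 1024 + 1 := ⟨_, rfl⟩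
  have haM : a ≤ M := by
    have := Nat.div_lt_self (Nat.pos_of_ne_zero hM0) (by norm_num : 1 < 1024)
    omega
  have hdiv1 : 2 ^ L / 1024 = 2 ^ (L - 10) := by
    rw [show (1024:ℕ) = 2 ^ 10 by norm_num, Nat.pow_div (by omega) (by norm_num)]
  have hdiv2 : 2 ^ (L + 1) / 1024 = 2 ^ (L - 9) := by
    rw [show (1024:ℕ) = 2 ^ 10 by norm_num, Nat.pow_div (by omega) (by norm_num)]
    congr 1 <;> omega
  have haub : a ≤ 2 ^ (L - 8) := by
    have h1 : M / 1024 ≤ 2 ^ (L - 9) := by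
      rw [← hdiv2]; exact Nat.div_le_div_right (le_of_lt hM2L)
    have h2 : 2 ^ (L - 8) = 2 * 2 ^ (L - 9) := by
      rw [← pow_succ']; congr 1; omega
    have h3 : (1:ℕ) ≤ 2 ^ (L - 9) := Nat.one_le_two_pow
    omega
  have halb : 2 ^ (L - 10) ≤ M / 1024 := by
    rw [← hdiv1]; exact Nat.div_le_div_right h2L
  have h2ka : 2 * k ≤ a := by
    have h4 : 2 ^ (t + 3) ≤ 2 ^ (L - 10) := Nat.pow_le_pow_right (by norm_num) (by omega)
    have h5 : (2:ℕ) ^ (t + 3) = 2 * 2 ^ (t + 2) := by ring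
    omega
  -- exponent inequalities
  have expA : (L - 8) * k ≤ c + (t - 2) * k := by
    obtain ⟨v, hv⟩ : ∃ v, v = 2 * u - 1 := ⟨_, rfl⟩
    obtain ⟨w, hw⟩ : ∃ w, w = t - 2 := ⟨_, rfl⟩
    obtain ⟨A, hA⟩ : ∃ A, A = L - 8 := ⟨_, rfl⟩
    rw [← hA, ← hw]
    have h1 : 2 * A ≤ v + 2 * w := by omega
    calc A * k = u * (2 * A) := by rw [hk]; ring
    _ ≤ u * (v + 2 * w) := Nat.mul_le_mul_left u h1
    _ = u * v + w * (2 * u) := by ring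
    _ = c + w * k := by rw [hc2, hv, hk]
  have expB : c + (2 * L + 3) ≤ (L - t - 3) * k := by
    obtain ⟨v, hv⟩ : ∃ v, v = 2 * u - 1 := ⟨_, rfl⟩
    obtain ⟨B, hB⟩ : ∃ B, B = L - t - 3 := ⟨_, rfl⟩
    rw [← hB]
    have h1 : 2 * B = v + 3 := by omega
    have h2 : 2 * L + 3 ≤ 3 * u := by omega
    calc c + (2 * L + 3) ≤ u * v + 3 * u := by
          rw [hc2, hv]; exact Nat.add_le_add_left h2 _
    _ = u * (v + 3) := by ring
    _ = u * (2 * B) := by rw [h1]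
    _ = B * k := by rw [hk]; ring
  -- real setup
  have hp2 : (0:ℝ) < 2 ^ c := by positivity
  have hcast2 : (2:ℝ) ^ (-(c:ℤ)) = ((2:ℝ) ^ c)⁻¹ := by
    rw [zpow_neg, zpow_natCast]
  set g : ℕ → ℝ := fun m => (m.choose k : ℝ) * (2:ℝ) ^ (-(c:ℤ)) with hg
  have hfpos : (0:ℝ) < (k.factorial : ℝ) := by exact_mod_cast k.factorial_pos
  -- endpoint A : g a ≤ D
  have hfact_lb : (2:ℝ) ^ ((t-2)*k) ≤ (k.factorial : ℝ) := by
    have h2 : ((2:ℕ) ^ t : ℝ) ≤ (k:ℝ) := by exact_mod_cast hk2t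
    push_cast at h2
    have h3 : (2:ℝ) ^ t = 2 ^ (t-2) * 4 := by
      rw [show (4:ℝ) = 2^2 by norm_num, ← pow_add]
      congr 1
      omega
    have h1 : ((2:ℝ) ^ (t-2)) ^ k ≤ ((k:ℝ)/4) ^ k := by
      apply pow_le_pow_left₀ (by positivity)
      rw [le_div_iff₀ (by norm_num : (0:ℝ) < 4)]
      nlinarith
    calc (2:ℝ) ^ ((t-2)*k) = ((2:ℝ) ^ (t-2)) ^ k := pow_mul 2 (t-2) k
    _ ≤ ((k:ℝ)/4) ^ k := h1
    _ ≤ (k.factorial : ℝ) := btl_fact_lb k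
  have hA : (a.choose k : ℝ) ≤ 2 ^ c := by
    have h1 : (a.choose k : ℝ) ≤ (a:ℝ) ^ k / (k.factorial : ℝ) :=
      Nat.choose_le_pow_div k a
    have h2 : (a:ℝ) ^ k ≤ (2:ℝ) ^ ((L-8)*k) := by
      calc (a:ℝ) ^ k ≤ (((2:ℕ) ^ (L-8) : ℕ):ℝ) ^ k := by
            apply pow_le_pow_left₀ (by positivity)
            exact_mod_cast haub
      _ = ((2:ℝ) ^ (L-8)) ^ k := by push_cast; ring
      _ = (2:ℝ) ^ ((L-8)*k) := (pow_mul 2 (L-8) k).symm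
    have h3 : (2:ℝ) ^ ((L-8)*k) ≤ 2 ^ c * 2 ^ ((t-2)*k) := by
      rw [← pow_add]
      exact pow_le_pow_right₀ one_le_two expA
    calc (a.choose k : ℝ) ≤ (a:ℝ) ^ k / (k.factorial : ℝ) := h1
    _ ≤ (2 ^ c * 2 ^ ((t-2)*k)) / (k.factorial : ℝ) := by
        gcongr
        linarith
    _ ≤ 2 ^ c := by
        rw [div_le_iff₀ hfpos]
        have := mul_le_mul_of_nonneg_left hfact_lb (le_of_lt hp2)
        linarith
  have hga : g a ≤ D := by
    have h1 : (a.choose k : ℝ) * (2:ℝ) ^ (-(c:ℤ)) ≤ 1 := by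
      rw [hcast2]
      calc (a.choose k : ℝ) * ((2:ℝ)^c)⁻¹ ≤ (2:ℝ)^c * ((2:ℝ)^c)⁻¹ :=
            mul_le_mul_of_nonneg_right hA (by positivity)
      _ = 1 := mul_inv_cancel₀ (ne_of_gt hp2)
    calc g a = (a.choose k : ℝ) * (2:ℝ) ^ (-(c:ℤ)) := rfl
    _ ≤ 1 := h1
    _ ≤ D := hD1
  -- endpoint B : 2D ≤ g M
  have hMk : 2 ^ (L-1) ≤ M + 1 - k := by
    have h1 : (2:ℕ) ^ L = 2 * 2 ^ (L-1) := by
      rw [← pow_succ']; congr 1; omega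
    have h2 : (2:ℕ) ^ (t+2) ≤ 2 ^ (L-1) := Nat.pow_le_pow_right (by norm_num) (by omega)
    omega
  have hfact_ub : (k.factorial : ℝ) ≤ (2:ℝ) ^ ((t+2)*k) := by
    have h1 : (k.factorial : ℝ) ≤ (k:ℝ) ^ k := by exact_mod_cast Nat.factorial_le_pow k
    have h2 : (k:ℝ) ≤ (2:ℝ) ^ (t+2) := by
      have : ((k:ℕ):ℝ) ≤ (((2:ℕ)^(t+2) : ℕ):ℝ) := Nat.cast_le.2 (le_of_lt hkub)
      push_cast at this
      exact this
    calc (k.factorial : ℝ) ≤ (k:ℝ) ^ k := h1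
    _ ≤ ((2:ℝ) ^ (t+2)) ^ k := pow_le_pow_left₀ (by positivity) h2 k
    _ = (2:ℝ) ^ ((t+2)*k) := (pow_mul 2 (t+2) k).symm
  have hB : 2 * (M:ℝ)^2 * 2^c ≤ (M.choose k : ℝ) := by
    have h1 : (((M + 1 - k : ℕ)) : ℝ) ^ k / (k.factorial : ℝ) ≤ (M.choose k : ℝ) := by
      have := Nat.pow_le_choose (α := ℝ) k M
      exact_mod_cast this
    have h2 : (2:ℝ) ^ ((L-1)*k) ≤ ((M+1-k:ℕ):ℝ) ^ k := by
      calc (2:ℝ) ^ ((L-1)*k) = ((2:ℝ) ^ (L-1)) ^ k := pow_mul 2 (L-1) k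
      _ ≤ ((M+1-k:ℕ):ℝ) ^ k := by
            apply pow_le_pow_left₀ (by positivity)
            exact_mod_cast hMk
    have he : (t+2)*k + (L-t-3)*k = (L-1)*k := by
      rw [← Nat.add_mul]
      congr 1
      omega
    have h4 : (2:ℝ) ^ ((L-t-3)*k) ≤ (M.choose k : ℝ) := by
      have h3 : (2:ℝ)^((L-1)*k) = (2:ℝ)^((t+2)*k) * (2:ℝ)^((L-t-3)*k) := by
        rw [← pow_add, he]
      calc (2:ℝ) ^ ((L-t-3)*k) = (2:ℝ)^((L-1)*k) / (2:ℝ)^((t+2)*k) := by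
            rw [h3, mul_div_cancel_left₀]
            positivity
      _ ≤ ((M+1-k:ℕ):ℝ) ^ k / (k.factorial : ℝ) :=
            div_le_div₀ (by positivity) h2 hfpos hfact_ub
      _ ≤ (M.choose k : ℝ) := h1
    have h5 : (M:ℝ) ≤ (2:ℝ) ^ (L+1) := by
      have : ((M:ℕ):ℝ) ≤ (((2:ℕ)^(L+1) : ℕ):ℝ) := Nat.cast_le.2 (le_of_lt hM2L)
      push_cast at this
      exact this
    have h6 : 2 * (M:ℝ)^2 * 2^c ≤ (2:ℝ) ^ (2*L+3+c) := by
      have he2 : (2:ℝ) ^ (2*L+3+c) = 2 * ((2:ℝ)^(L+1))^2 * 2^c := by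
        rw [show 2*L+3+c = 1 + ((L+1) + (L+1)) + c by omega, pow_add, pow_add, pow_add]
        ring
      rw [he2]
      have hsq : (M:ℝ)^2 ≤ ((2:ℝ)^(L+1))^2 :=
        pow_le_pow_left₀ (Nat.cast_nonneg M) h5 2
      exact mul_le_mul_of_nonneg_right
        (by linarith : 2*(M:ℝ)^2 ≤ 2*((2:ℝ)^(L+1))^2) hp2.le
    have h7 : (2:ℝ) ^ (2*L+3+c) ≤ (2:ℝ) ^ ((L-t-3)*k) := by
      apply pow_le_pow_right₀ one_le_two
      omega
    linarith
  have hgM : 2 * D ≤ g M := by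
    have h1 : 2*D*2^c ≤ (M.choose k : ℝ) := by
      have h2 : 2*D*2^c ≤ 2*(M:ℝ)^2*2^c := by nlinarith
      linarith
    calc 2 * D = (2*D*2^c) * ((2:ℝ)^c)⁻¹ := by
          rw [mul_assoc, mul_inv_cancel₀ (ne_of_gt hp2), mul_one]
    _ ≤ (M.choose k : ℝ) * ((2:ℝ)^c)⁻¹ :=
          mul_le_mul_of_nonneg_right h1 (by positivity)
    _ = g M := by rw [hg]; rw [hcast2]
  -- step
  have hstep : ∀ m, a ≤ m → m < M → g (m+1) ≤ 2 * g m := by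
    intro m hm _
    have h1 : (((m+1).choose k : ℕ) : ℝ) ≤ 2 * (m.choose k : ℝ) := by
      exact_mod_cast Nat.cast_le.2 (btl_choose_step hk0 (le_trans h2ka hm))
    have h2 : (0:ℝ) ≤ (2:ℝ)^(-(c:ℤ)) := by positivity
    calc g (m+1) = ((m+1).choose k : ℝ) * (2:ℝ)^(-(c:ℤ)) := rfl
    _ ≤ (2 * (m.choose k : ℝ)) * (2:ℝ)^(-(c:ℤ)) := mul_le_mul_of_nonneg_right h1 h2
    _ = 2 * g m := by rw [hg]; ring
  obtain ⟨m, hm1, hm2, hm3, hm4⟩ :=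
    btl_ivt g D hD0 M a haM hga (le_trans (by linarith) hgM) hstep
  -- logb facts
  have hlogb1 : (L:ℝ) ≤ Real.logb 2 M := by
    have h1 : ((2:ℝ))^L ≤ (M:ℝ) := by exact_mod_cast h2L
    calc (L:ℝ) = Real.logb 2 ((2:ℝ)^L) := by
          rw [Real.logb_pow, Real.logb_self_eq_one (by norm_num)]
          ring
    _ ≤ Real.logb 2 M := Real.logb_le_logb_of_le one_lt_two (by positivity) h1
  have hlogb2 : Real.logb 2 M ≤ (L:ℝ) + 1 := by
    have h1 : (M:ℝ) ≤ ((2:ℝ))^(L+1) := by exact_mod_cast le_of_lt hM2L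
    have hMpos : (0:ℝ) < M := by exact_mod_cast Nat.pos_of_ne_zero hM0
    calc Real.logb 2 M ≤ Real.logb 2 ((2:ℝ)^(L+1)) :=
          Real.logb_le_logb_of_le one_lt_two hMpos h1
    _ = (L:ℝ) + 1 := by
          rw [Real.logb_pow, Real.logb_self_eq_one (by norm_num)]
          push_cast
          ring
  have hL64R : (64:ℝ) ≤ (L:ℝ) := by exact_mod_cast hL64
  have hkcast : (k:ℝ) = 2*(L:ℝ) - 2*(t:ℝ) - 8 := by
    rw [hk, hu]
    push_cast [Nat.cast_sub (show t + 4 ≤ L by omega)]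
    ring
  have htcast : (2:ℝ)^t ≤ (L:ℝ) := by exact_mod_cast h2tL
  -- epsilon key bound
  have hεL : 2*(t:ℝ) + 10 ≤ ε * (L:ℝ) := by
    have hLpos : (0:ℝ) < (L:ℝ) := by linarith
    have hsq : Real.sqrt L * Real.sqrt L = (L:ℝ) := Real.mul_self_sqrt (le_of_lt hLpos)
    have hs1 : (1:ℝ) ≤ Real.sqrt L := Real.one_le_sqrt.2 (by linarith)
    have h18 : 18 ≤ ε * Real.sqrt L := by
      have hceil : ((18/ε)^2 : ℝ) ≤ (n:ℝ) := by
        have h1 : (18/ε)^2 ≤ (⌈(18/ε)^2⌉₊ : ℝ) := Nat.le_ceil _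
        have h2 : (⌈(18/ε)^2⌉₊ : ℝ) ≤ (n:ℝ) := by
          have h3 : ⌈(18/ε)^2⌉₊ ≤ n := by omega
          exact_mod_cast h3
        linarith
      have hnLR : ((n:ℕ):ℝ) ≤ (L:ℝ) := by exact_mod_cast hnL
      have h1 : ((18/ε)^2 : ℝ) ≤ (L:ℝ) := by linarith
      have h2 : 18/ε ≤ Real.sqrt L := by
        rw [show (18/ε : ℝ) = Real.sqrt ((18/ε)^2) from (Real.sqrt_sq (by positivity)).symm]
        exact Real.sqrt_le_sqrt h1
      calc (18:ℝ) = ε * (18/ε) := by field_simp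
      _ ≤ ε * Real.sqrt L := mul_le_mul_of_nonneg_left h2 (le_of_lt hε)
    have ht4s : (t:ℝ) ≤ 4 * Real.sqrt L := by
      have h2 : (t:ℝ) * Real.log 2 ≤ Real.log L := by
        calc (t:ℝ)*Real.log 2 = Real.log ((2:ℝ)^t) := (Real.log_pow 2 t).symm
        _ ≤ Real.log L := Real.log_le_log (by positivity) htcast
      have h3 : Real.log L ≤ 2 * Real.sqrt L := by
        have h4 : Real.log (L:ℝ) = 2 * Real.log (Real.sqrt L) := by
          conv_lhs => rw [← Real.sq_sqrt (le_of_lt hLpos)]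
          rw [Real.log_pow]
          push_cast
          ring
        have h5 : Real.log (Real.sqrt L) ≤ Real.sqrt L - 1 :=
          Real.log_le_sub_one_of_pos (by positivity)
        linarith
      have hlog2 : (1/2:ℝ) < Real.log 2 := by
        have := Real.log_two_gt_d9; linarith
      have htn : (0:ℝ) ≤ (t:ℝ) := Nat.cast_nonneg t
      nlinarith
    nlinarith [mul_le_mul_of_nonneg_right h18 (Real.sqrt_nonneg (L:ℝ))]
  refine ⟨m, k, ?_, hm2, ?_, ?_, ?_, ?_⟩
  · -- M/2^10 ≤ m
    have hdm : M < 1024 * a := by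
      have h1 := Nat.div_add_mod M 1024
      have h2 : M % 1024 < 1024 := Nat.mod_lt M (by norm_num)
      omega
    have h3 : (M:ℝ) < 1024 * (a:ℝ) := by exact_mod_cast hdm
    have h4 : (a:ℝ) ≤ (m:ℝ) := by exact_mod_cast hm1
    rw [div_le_iff₀ (by norm_num : (0:ℝ) < 2^10)]
    nlinarith
  · -- (2-ε) logb ≤ k
    rcases le_or_gt ε 2 with hcase | hcase
    · have h1 : (2-ε) * Real.logb 2 M ≤ (2-ε) * ((L:ℝ)+1) :=
        mul_le_mul_of_nonneg_left hlogb2 (by linarith)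
      have h2 : ε * (L:ℝ) ≤ ε * ((L:ℝ)+1) := by nlinarith
      rw [hkcast]
      nlinarith
    · have h1 : (2-ε) * Real.logb 2 M ≤ 0 := by
        apply mul_nonpos_of_nonpos_of_nonneg (by linarith)
        linarith
      have h2 : (0:ℝ) ≤ (k:ℝ) := Nat.cast_nonneg k
      linarith
  · -- k ≤ (2+ε) logb
    have h1 : (k:ℝ) ≤ 2 * (L:ℝ) := by exact_mod_cast hkL
    nlinarith [hlogb1, hε.le]
  · rw [← hc]; exact hm3
  · rw [← hc]; exact hm4
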